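/- arXiv:1103.0996 — 4 statements merged into one kernel-verified Lean document; each statement's English description precedes it below -/
import Mathlib

section
/- Independence lemma: Let 𝒜 be a finite set, 𝒜′ ⊂ 𝒜 a nonempty subset, and p_A a pmf on 𝒜. Let the random vector Aⁿ = (A₁,…,Aₙ) be distributed proportionally to the product distribution ∏ₗ p_A(aₗ) restricted to the support set {aⁿ : a_k ∈ 𝒜′ for some k}. Given Aⁿ, let I be drawn uniformly from the set {i : A_i ∈ 𝒜′}, and let J = ((I+s−1) mod n) + 1 for a fixed integer s with 1 ≤ s ≤ n−1. Then the random variables A_I and A_J are independent. -/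
open Finset Real

noncomputable section

variable {Ω : Type*} [Fintype Ω]

/-- `μ` is a probability mass function on the finite sample space `Ω`. -/
def IsPMF (μ : Ω → ℝ) : Prop := (∀ ω, 0 ≤ μ ω) ∧ ∑ ω, μ ω = 1

/-- Probability that the random variable `X` takes the value `a`. -/
def pr {α : Type*} [DecidableEq α] (μ : Ω → ℝ) (X : Ω → α) (a : α) : ℝ :=
  ∑ ω, if X ω = a then μ ω else 0

/-- Shannon entropy (in bits). -/
def ent {α : Type*} [Fintype α] [DecidableEq α] (μ : Ω → ℝ) (X : Ω → α) : ℝ :=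
  -∑ a, pr μ X a * Real.logb 2 (pr μ X a)

/-- Conditional entropy `H(X|Y)`. -/
def condEnt {α β : Type*} [Fintype α] [DecidableEq α] [Fintype β] [DecidableEq β]
    (μ : Ω → ℝ) (X : Ω → α) (Y : Ω → β) : ℝ :=
  ent μ (fun ω => (X ω, Y ω)) - ent μ Y

/-- Mutual information `I(X;Y)`. -/
def mutInf {α β : Type*} [Fintype α] [DecidableEq α] [Fintype β] [DecidableEq β]
    (μ : Ω → ℝ) (X : Ω → α) (Y : Ω → β) : ℝ :=
  ent μ X + ent μ Y - ent μ (fun ω => (X ω, Y ω))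

/-- Conditional mutual information `I(X;Y|Z)`. -/
def condMutInf {α β γ : Type*} [Fintype α] [DecidableEq α] [Fintype β] [DecidableEq β]
    [Fintype γ] [DecidableEq γ] (μ : Ω → ℝ) (X : Ω → α) (Y : Ω → β) (Z : Ω → γ) : ℝ :=
  condEnt μ X Z + condEnt μ Y Z - condEnt μ (fun ω => (X ω, Y ω)) Z

set_option linter.unusedSectionVars false
lemma pr_sum_eq {α : Type*} [Fintype α] [DecidableEq α] (μ : Ω → ℝ) (X : Ω → α) :
    ∑ a, pr μ X a = ∑ ω, μ ω := by
  unfold pr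
  rw [Finset.sum_comm]
  refine Finset.sum_congr rfl fun ω _ => ?_
  simp

lemma pr_fst {α β : Type*} [Fintype α] [DecidableEq α] [Fintype β] [DecidableEq β]
    (μ : Ω → ℝ) (X : Ω → α) (Y : Ω → β) (y : α) :
    ∑ z, pr μ (fun ω => (X ω, Y ω)) (y, z) = pr μ X y := by
  unfold pr
  rw [Finset.sum_comm]
  refine Finset.sum_congr rfl fun ω _ => ?_
  by_cases h : X ω = y <;> simp [h, Prod.ext_iff]

lemma pr_snd {α β : Type*} [Fintype α] [DecidableEq α] [Fintype β] [DecidableEq β]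
    (μ : Ω → ℝ) (X : Ω → α) (Y : Ω → β) (z : β) :
    ∑ y, pr μ (fun ω => (X ω, Y ω)) (y, z) = pr μ Y z := by
  unfold pr
  rw [Finset.sum_comm]
  refine Finset.sum_congr rfl fun ω _ => ?_
  by_cases h : Y ω = z <;> simp [h, Prod.ext_iff]

section split
variable {α : Type*} {n : ℕ} [NeZero n] (s' : Fin n) (hs : s' ≠ 0)

def splitE : (α × α × ({j : Fin n // j ≠ 0 ∧ j ≠ s'} → α)) ≃ (Fin n → α) where
  toFun x j := if h : j = 0 then x.1 else if h' : j = s' then x.2.1 else x.2.2 ⟨j, h, h'⟩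
  invFun a := (a 0, a s', fun t => a t.1)
  left_inv := by
    rintro ⟨x₁, x₂, b⟩
    refine Prod.ext rfl (Prod.ext ?_ ?_)
    · simp [hs]
    · funext t
      simp [t.2.1, t.2.2]
  right_inv := by
    intro a; funext j
    by_cases h : j = 0
    · subst h; simp
    · by_cases h' : j = s'
      · subst h'; simp [hs]
      · simp [h, h']

lemma splitE_zero (x₁ x₂ : α) (b : {j : Fin n // j ≠ 0 ∧ j ≠ s'} → α) :
    splitE s' hs (x₁, x₂, b) 0 = x₁ := by simp [splitE]

lemma splitE_s (x₁ x₂ : α) (b : {j : Fin n // j ≠ 0 ∧ j ≠ s'} → α) :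
    splitE s' hs (x₁, x₂, b) s' = x₂ := by simp [splitE, hs]

lemma splitE_ne (x₁ x₂ : α) (b : {j : Fin n // j ≠ 0 ∧ j ≠ s'} → α)
    (t : {j : Fin n // j ≠ 0 ∧ j ≠ s'}) :
    splitE s' hs (x₁, x₂, b) t.1 = b t := by
  simp [splitE, t.2.1, t.2.2]

lemma erase_erase_eq :
    ((Finset.univ : Finset (Fin n)).erase 0).erase s'
      = Finset.univ.filter (fun j => j ≠ 0 ∧ j ≠ s') := by
  ext j; simp [and_comm]

variable [Fintype α]

lemma prod_splitE (pA : α → ℝ) (x₁ x₂ : α) (b : {j : Fin n // j ≠ 0 ∧ j ≠ s'} → α) :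
    (∏ l, pA (splitE s' hs (x₁, x₂, b) l)) = pA x₁ * pA x₂ * ∏ t, pA (b t) := by
  have h0 : (0 : Fin n) ∈ (Finset.univ : Finset (Fin n)) := Finset.mem_univ _
  have hmem : s' ∈ (Finset.univ : Finset (Fin n)).erase 0 := by simp [hs]
  rw [← Finset.mul_prod_erase Finset.univ _ h0, ← Finset.mul_prod_erase _ _ hmem,
    splitE_zero, splitE_s, ← mul_assoc]
  congr 1
  rw [erase_erase_eq, Finset.prod_subtype (p := fun j : Fin n => j ≠ 0 ∧ j ≠ s') _ (by simp) (fun j => pA (splitE s' hs (x₁, x₂, b) j))]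
  exact Finset.prod_congr rfl fun t _ => by rw [splitE_ne]

lemma card_splitE [DecidableEq α] (A' : Finset α) (x₁ x₂ : α)
    (b : {j : Fin n // j ≠ 0 ∧ j ≠ s'} → α) :
    (Finset.univ.filter (fun k => splitE s' hs (x₁, x₂, b) k ∈ A')).card
      = (if x₁ ∈ A' then 1 else 0) + (if x₂ ∈ A' then 1 else 0)
        + (Finset.univ.filter (fun t => b t ∈ A')).card := by
  rw [Finset.card_filter, Finset.card_filter]
  have h0 : (0 : Fin n) ∈ (Finset.univ : Finset (Fin n)) := Finset.mem_univ _
  have hmem : s' ∈ (Finset.univ : Finset (Fin n)).erase 0 := by simp [hs]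
  rw [← Finset.add_sum_erase Finset.univ _ h0, ← Finset.add_sum_erase _ _ hmem,
    splitE_zero, splitE_s, ← add_assoc]
  congr 1
  rw [erase_erase_eq, Finset.sum_subtype (p := fun j : Fin n => j ≠ 0 ∧ j ≠ s') _ (by simp)
    (fun j => if splitE s' hs (x₁, x₂, b) j ∈ A' then 1 else 0)]
  exact Finset.sum_congr rfl fun t _ => by rw [splitE_ne]

end split


set_option maxHeartbeats 2000000 in
/-- Independence lemma: `Aⁿ` is distributed proportionally to the product pmf
`∏ₗ p_A(aₗ)` restricted to sequences hitting `𝒜′`; given `Aⁿ`, the index `I` is uniform on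
`{i : A_i ∈ 𝒜′}`, and `J = ((I+s−1) mod n) + 1` (cyclic shift by `s`, `1 ≤ s ≤ n−1`).
Then `A_I` and `A_J` are independent. -/
theorem independence_lemma {α : Type*} [Fintype α] [DecidableEq α]
    (pA : α → ℝ) (hpA0 : ∀ a, 0 ≤ pA a) (hpA1 : ∑ a, pA a = 1)
    (A' : Finset α) (hA'ne : A'.Nonempty) (hA'prop : A' ⊂ Finset.univ)
    (n : ℕ) (hn : 2 ≤ n) (s : ℕ) (hs1 : 1 ≤ s) (hs2 : s ≤ n - 1)
    (c : ℝ)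
    (hc : c = ∑ a ∈ Finset.univ.filter (fun a : Fin n → α => ∃ k, a k ∈ A'), ∏ l, pA (a l))
    (hcpos : 0 < c)
    (μ : (Fin n → α) × Fin n → ℝ)
    (hμ : ∀ p : (Fin n → α) × Fin n,
      μ p = if p.1 p.2 ∈ A'
        then (∏ l, pA (p.1 l)) / (c * ((Finset.univ.filter (fun k => p.1 k ∈ A')).card : ℝ))
        else 0)
    (J : (Fin n → α) × Fin n → Fin n)
    (hJ : ∀ p : (Fin n → α) × Fin n, J p = ⟨(p.2.val + s) % n, Nat.mod_lt _ (by omega)⟩) :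
    ∀ y z : α,
      pr μ (fun p => (p.1 p.2, p.1 (J p))) (y, z)
        = pr μ (fun p => p.1 p.2) y * pr μ (fun p => p.1 (J p)) z := by
  classical
  haveI : NeZero n := ⟨by omega⟩
  have hsn : s < n := by omega
  set s' : Fin n := ⟨s, hsn⟩ with hs'def
  have hs'0 : s' ≠ 0 := by
    rw [hs'def]
    intro h
    have h2 := congrArg Fin.val h
    simp only [Fin.val_zero] at h2
    omega
  have hJ' : ∀ p : (Fin n → α) × Fin n, J p = p.2 + s' := by
    intro p; rw [hJ]; apply Fin.ext
    simp [Fin.val_add, hs'def]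
  set T := {j : Fin n // j ≠ 0 ∧ j ≠ s'} with hT
  set g : (T → α) → ℝ := fun b => ∏ t, pA (b t) with hg
  set gc : (T → α) → ℕ := fun b => (Finset.univ.filter (fun t => b t ∈ A')).card with hgc
  set D : ℕ → ℝ := fun m => ∑ b : T → α, g b / (c * ((m + gc b : ℕ) : ℝ)) with hD
  set K : ℝ := ∑ z, pA z * D (1 + (if z ∈ A' then 1 else 0)) with hK
  set q : ℝ := ∑ y, (if y ∈ A' then pA y else 0) with hq
  -- the joint distribution
  have hjoint : ∀ y z : α, pr μ (fun p => (p.1 p.2, p.1 (J p))) (y, z)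
      = n * (if y ∈ A' then pA y * pA z * D (1 + (if z ∈ A' then 1 else 0)) else 0) := by
    intro y z
    unfold pr
    rw [Fintype.sum_prod_type_right]
    have hrot : ∀ i : Fin n,
        (∑ a : Fin n → α, if (a i, a (i + s')) = (y, z) then
          (if a i ∈ A' then (∏ l, pA (a l)) / (c * ((Finset.univ.filter (fun k => a k ∈ A')).card : ℝ)) else 0) else 0)
        = ∑ a : Fin n → α, if (a 0, a s') = (y, z) then
          (if a 0 ∈ A' then (∏ l, pA (a l)) / (c * ((Finset.univ.filter (fun k => a k ∈ A')).card : ℝ)) else 0) else 0 := by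
      intro i
      have hbij : Function.Bijective (fun a : Fin n → α => fun j => a (j - i)) := by
        constructor
        · intro a b h
          funext j
          have := congrFun h (j + i)
          simpa using this
        · intro b
          exact ⟨fun j => b (j + i), by funext j; simp⟩
      refine (Fintype.sum_bijective (fun a : Fin n → α => fun j => a (j - i)) hbij
        (fun a : Fin n → α => if (a 0, a s') = (y, z) then
          (if a 0 ∈ A' then (∏ l, pA (a l)) / (c * ((Finset.univ.filter (fun k => a k ∈ A')).card : ℝ)) else 0) else 0)
        (fun a : Fin n → α => if (a i, a (i + s')) = (y, z) then
          (if a i ∈ A' then (∏ l, pA (a l)) / (c * ((Finset.univ.filter (fun k => a k ∈ A')).card : ℝ)) else 0) else 0)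
        ?_).symm
      intro a
      have h1 : i - i = (0 : Fin n) := sub_self i
      have h2 : i + s' - i = s' := by rw [add_comm]; exact add_sub_cancel_right s' i
      have hf : (∏ l, pA (a (l - i))) = ∏ l, pA (a l) :=
        Equiv.prod_comp (Equiv.subRight i) (fun l => pA (a l))
      have hN : (Finset.univ.filter (fun k : Fin n => a (k - i) ∈ A')).card
          = (Finset.univ.filter (fun k : Fin n => a k ∈ A')).card := by
        rw [Finset.card_filter, Finset.card_filter]
        exact Equiv.sum_comp (Equiv.subRight i) (fun l => if a l ∈ A' then 1 else 0)
      simp only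
      rw [h1, h2, hf, hN]
    have hbody : ∀ i : Fin n,
        (∑ a : Fin n → α, if ((a, i).1 (a, i).2, (a, i).1 (J (a, i))) = (y, z) then μ (a, i) else 0)
        = ∑ a : Fin n → α, if (a 0, a s') = (y, z) then
          (if a 0 ∈ A' then (∏ l, pA (a l)) / (c * ((Finset.univ.filter (fun k => a k ∈ A')).card : ℝ)) else 0) else 0 := by
      intro i
      rw [← hrot i]
      refine Finset.sum_congr rfl fun a _ => ?_
      rw [hμ (a, i), hJ' (a, i)]
    rw [Finset.sum_congr rfl (fun i _ => hbody i), Finset.sum_const, Finset.card_univ,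
      Fintype.card_fin, nsmul_eq_mul]
    congr 1
    rw [← Equiv.sum_comp (splitE s' hs'0) (fun a : Fin n → α => if (a 0, a s') = (y, z) then
      (if a 0 ∈ A' then (∏ l, pA (a l)) / (c * ((Finset.univ.filter (fun k => a k ∈ A')).card : ℝ)) else 0) else 0)]
    rw [Fintype.sum_prod_type]
    simp only [Fintype.sum_prod_type]
    simp only [splitE_zero, splitE_s, prod_splitE, card_splitE, Prod.mk.injEq, ite_and]
    simp only [Finset.sum_ite_irrel, Finset.sum_const_zero, Finset.sum_ite_eq',
      Finset.mem_univ, if_true]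
    by_cases hy : y ∈ A'
    · simp only [hy, if_true]
      rw [hD]
      simp only [hg, hgc]
      rw [Finset.mul_sum]
      refine Finset.sum_congr rfl fun b _ => ?_
      rw [mul_div_assoc]
    · simp [hy]
  -- marginal of the first coordinate
  have hMIsum : ∀ y : α, pr μ (fun p => p.1 p.2) y
      = ∑ z, pr μ (fun p => (p.1 p.2, p.1 (J p))) (y, z) := by
    intro y
    unfold pr
    rw [Finset.sum_comm]
    refine Finset.sum_congr rfl fun ω _ => ?_
    by_cases h : ω.1 ω.2 = y <;> simp [h, Prod.ext_iff]
  have hMJsum : ∀ z : α, pr μ (fun p => p.1 (J p)) z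
      = ∑ y, pr μ (fun p => (p.1 p.2, p.1 (J p))) (y, z) := by
    intro z
    unfold pr
    rw [Finset.sum_comm]
    refine Finset.sum_congr rfl fun ω _ => ?_
    by_cases h : ω.1 (J ω) = z <;> simp [h, Prod.ext_iff]
  have hMI : ∀ y : α, pr μ (fun p => p.1 p.2) y
      = n * (if y ∈ A' then pA y * K else 0) := by
    intro y
    rw [hMIsum y, Finset.sum_congr rfl (fun z _ => hjoint y z), ← Finset.mul_sum]
    congr 1
    by_cases hy : y ∈ A'
    · simp only [hy, if_true, hK]
      rw [Finset.mul_sum]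
      exact Finset.sum_congr rfl fun z _ => by ring
    · simp [hy]
  have hMJ : ∀ z : α, pr μ (fun p => p.1 (J p)) z
      = n * (q * (pA z * D (1 + (if z ∈ A' then 1 else 0)))) := by
    intro z
    rw [hMJsum z, Finset.sum_congr rfl (fun y _ => hjoint y z), ← Finset.mul_sum]
    congr 1
    rw [hq, Finset.sum_mul]
    refine Finset.sum_congr rfl fun y _ => ?_
    by_cases hy : y ∈ A' <;> simp [hy] <;> ring
  -- total mass is 1
  have htot : ∑ ω : (Fin n → α) × Fin n, μ ω = 1 := by
    rw [Fintype.sum_prod_type]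
    have hin : ∀ a : Fin n → α, (∑ i : Fin n, μ (a, i))
        = if (∃ k, a k ∈ A') then (∏ l, pA (a l)) / c else 0 := by
      intro a
      have h1 : (∑ i : Fin n, μ (a, i)) = ∑ i : Fin n, (if a i ∈ A' then
          (∏ l, pA (a l)) / (c * ((Finset.univ.filter (fun k => a k ∈ A')).card : ℝ)) else 0) :=
        Finset.sum_congr rfl fun i _ => by rw [hμ (a, i)]
      rw [h1, ← Finset.sum_filter, Finset.sum_const, nsmul_eq_mul]
      by_cases hne : ∃ k, a k ∈ A'
      · have hcard : (Finset.univ.filter (fun k => a k ∈ A')).card ≠ 0 := by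
          rw [Finset.card_ne_zero, Finset.filter_nonempty_iff]
          obtain ⟨k, hk⟩ := hne
          exact ⟨k, Finset.mem_univ k, hk⟩
        have hcast : ((Finset.univ.filter (fun k => a k ∈ A')).card : ℝ) ≠ 0 :=
          Nat.cast_ne_zero.mpr hcard
        rw [if_pos hne]
        field_simp
      · have hcard : (Finset.univ.filter (fun k => a k ∈ A')).card = 0 := by
          rw [Finset.card_eq_zero, Finset.filter_eq_empty_iff]
          intro k _ hk
          exact hne ⟨k, hk⟩
        rw [if_neg hne, hcard]
        simp
    rw [Finset.sum_congr rfl (fun a _ => hin a), ← Finset.sum_filter, ← Finset.sum_div, ← hc]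
    exact div_self hcpos.ne'
  -- hence n * q * K = 1
  have hnqK : (n : ℝ) * q * K = 1 := by
    have h1 : ∑ y, pr μ (fun p => p.1 p.2) y = 1 := by
      rw [← htot]
      unfold pr
      rw [Finset.sum_comm]
      refine Finset.sum_congr rfl fun ω _ => ?_
      simp
    rw [Finset.sum_congr rfl (fun y _ => hMI y), ← Finset.mul_sum] at h1
    calc (n : ℝ) * q * K = (n : ℝ) * ∑ y, (if y ∈ A' then pA y * K else 0) := by
          rw [mul_assoc, hq, Finset.sum_mul]
          congr 1
          refine Finset.sum_congr rfl fun y _ => ?_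
          by_cases hy : y ∈ A' <;> simp [hy]
      _ = 1 := h1
  -- conclusion
  intro y z
  rw [hjoint y z, hMI y, hMJ z]
  by_cases hy : y ∈ A'
  · simp only [hy, if_true]
    linear_combination (-((n : ℝ) * pA y * pA z * D (1 + (if z ∈ A' then 1 else 0)))) * hnqK
  · simp [hy]
end
end

section
/- In the setting of the independence lemma, the joint distribution of Y = A_I and Z = A_J factors: for y ∈ 𝒜′ and z ∈ 𝒜, p(y,z) = (n·p_A(y)·p_A(z)/c) · Σ_{a₃ⁿ ∈ 𝒜^{n−2}} ∏_{l=3}^{n} p_A(a_l) / (1 + 1_{𝒜′}(z) + Σ_{k=3}^{n} 1_{𝒜′}(a_k)), where the second factor depends only on z (and not on y); and p(y,z) = 0 for y ∉ 𝒜′. -/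
open Finset Real

noncomputable section

variable {Ω : Type*} [Fintype Ω]

lemma fin_one_succ (m : ℕ) : (1 : Fin (m+2)) = Fin.succ 0 := by
  ext; simp

lemma L0 {α : Type*} [Fintype α] [DecidableEq α]
    (pA : α → ℝ) (A' : Finset α) (c : ℝ) (y z : α) (hy : y ∈ A') (m : ℕ) :
    ∑ a : Fin (m + 2) → α,
      (if a 0 = y ∧ a 1 = z
        then (∏ l, pA (a l)) /
          (c * (((Finset.univ.filter (fun k => a k ∈ A')).card : ℝ)))
        else 0)
    = pA y * pA z / c *
        ∑ b : Fin m → α,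
          (∏ l, pA (b l)) /
            (1 + (if z ∈ A' then (1 : ℝ) else 0)
              + ∑ k, (if b k ∈ A' then (1 : ℝ) else 0)) := by
  have hcard : ∀ (nn : ℕ) (a : Fin nn → α),
      ((Finset.univ.filter (fun k => a k ∈ A')).card : ℝ)
        = ∑ k, if a k ∈ A' then (1:ℝ) else 0 := by
    intro nn a
    rw [Finset.card_filter]
    push_cast
    rfl
  let e : α × α × (Fin m → α) ≃ (Fin (m+2) → α) :=
    (Equiv.prodCongr (Equiv.refl α) (Fin.consEquiv fun _ => α)).trans
      (Fin.consEquiv fun _ => α)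
  have he : ∀ (u v : α) (b : Fin m → α), e (u, v, b) = Fin.cons u (Fin.cons v b) :=
    fun _ _ _ => rfl
  have step : ∀ x : α × α × (Fin m → α),
      (if x.1 = y ∧ x.2.1 = z
        then (pA x.1 * (pA x.2.1 * ∏ l, pA (x.2.2 l))) /
          (c * ((if x.1 ∈ A' then (1:ℝ) else 0)
            + ((if x.2.1 ∈ A' then (1:ℝ) else 0)
              + ∑ k, (if x.2.2 k ∈ A' then (1:ℝ) else 0))))
        else 0)
      = (fun a : Fin (m+2) → α =>
          if a 0 = y ∧ a 1 = z
          then (∏ l, pA (a l)) /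
            (c * (((Finset.univ.filter (fun k => a k ∈ A')).card : ℝ)))
          else 0) (e x) := by
    rintro ⟨u, v, b⟩
    simp only [he, hcard]
    rw [fin_one_succ]
    simp [Fin.prod_univ_succ, Fin.sum_univ_succ, -Finset.sum_boole]
  rw [← Fintype.sum_equiv e _ _ step]
  rw [Fintype.sum_prod_type]
  rw [Fintype.sum_eq_single y]; swap
  · intro u hu
    apply Finset.sum_eq_zero
    intro p _
    simp [hu]
  rw [Fintype.sum_prod_type]
  rw [Fintype.sum_eq_single z]; swap
  · intro v hv
    apply Finset.sum_eq_zero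
    intro b _
    simp [hv]
  rw [Finset.mul_sum]
  apply Finset.sum_congr rfl
  intro b _
  simp only [and_self, if_true, eq_self_iff_true, hy]
  rw [div_mul_div_comm]
  ring

/-- in the setting of the independence lemma with `s = 1`, the joint distribution of
`Y = A_I` and `Z = A_J` factors: `p(y,z) = 0` for `y ∉ 𝒜′`, and for `y ∈ 𝒜′`,
`p(y,z) = (n·p_A(y)·p_A(z)/c) · Σ_{a₃ⁿ} ∏_{l≥3} p_A(a_l) / (1 + 1_{𝒜′}(z) + Σ_{k≥3} 1_{𝒜′}(a_k))`,
where the sum depends only on `z`. -/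
theorem stmt5 {α : Type*} [Fintype α] [DecidableEq α]
    (pA : α → ℝ) (hpA0 : ∀ a, 0 ≤ pA a) (hpA1 : ∑ a, pA a = 1)
    (A' : Finset α) (hA'ne : A'.Nonempty) (hA'prop : A' ⊂ Finset.univ)
    (n : ℕ) (hn : 2 ≤ n)
    (c : ℝ)
    (hc : c = ∑ a ∈ Finset.univ.filter (fun a : Fin n → α => ∃ k, a k ∈ A'), ∏ l, pA (a l))
    (hcpos : 0 < c)
    (μ : (Fin n → α) × Fin n → ℝ)
    (hμ : ∀ p : (Fin n → α) × Fin n,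
      μ p = if p.1 p.2 ∈ A'
        then (∏ l, pA (p.1 l)) / (c * ((Finset.univ.filter (fun k => p.1 k ∈ A')).card : ℝ))
        else 0)
    (J : (Fin n → α) × Fin n → Fin n)
    (hJ : ∀ p : (Fin n → α) × Fin n, J p = ⟨(p.2.val + 1) % n, Nat.mod_lt _ (by omega)⟩) :
    (∀ y z : α, y ∉ A' → pr μ (fun p => (p.1 p.2, p.1 (J p))) (y, z) = 0)
    ∧ ∀ y ∈ A', ∀ z : α,
        pr μ (fun p => (p.1 p.2, p.1 (J p))) (y, z)
          = (n * pA y * pA z / c) *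
              ∑ b : Fin (n - 2) → α,
                (∏ l, pA (b l)) /
                  (1 + (if z ∈ A' then (1 : ℝ) else 0)
                    + ∑ k, (if b k ∈ A' then (1 : ℝ) else 0)) := by
  obtain ⟨m, rfl⟩ := Nat.exists_eq_add_of_le' hn
  unfold pr
  constructor
  · intro y z hy
    apply Finset.sum_eq_zero
    intro p _
    split_ifs with h
    · simp only [Prod.mk.injEq] at h
      rw [hμ, h.1, if_neg hy]
    · rfl
  · intro y hy z
    show _ = ((m + 2 : ℕ) : ℝ) * pA y * pA z / c *
        ∑ b : Fin m → α,
          (∏ l, pA (b l)) /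
            (1 + (if z ∈ A' then (1 : ℝ) else 0)
              + ∑ k, (if b k ∈ A' then (1 : ℝ) else 0))
    have hj : ∀ (a : Fin (m+2) → α) (i : Fin (m+2)), J (a, i) = i + 1 := by
      intro a i
      rw [hJ]
      ext
      simp [Fin.add_def, Nat.mod_eq_of_lt (show 1 < m + 2 by omega)]
    have key : ∀ i : Fin (m + 2),
        (∑ a : Fin (m+2) → α, if ((a i, a (J (a, i))) = (y, z)) then μ (a, i) else 0)
          = pA y * pA z / c *
              ∑ b : Fin m → α,
                (∏ l, pA (b l)) /
                  (1 + (if z ∈ A' then (1 : ℝ) else 0)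
                    + ∑ k, (if b k ∈ A' then (1 : ℝ) else 0)) := by
      intro i
      rw [← L0 pA A' c y z hy m]
      let E : (Fin (m+2) → α) ≃ (Fin (m+2) → α) :=
        { toFun := fun f k => f (k + i)
          invFun := fun f k => f (k - i)
          left_inv := fun f => funext fun k => congrArg f (by abel)
          right_inv := fun f => funext fun k => congrArg f (by abel) }
      apply Fintype.sum_equiv E
      intro a
      simp only [E, Equiv.coe_fn_mk]
      have h0 : (0 : Fin (m+2)) + i = i := zero_add i
      have h1 : (1 : Fin (m+2)) + i = J (a, i) := by rw [hj]; abel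
      have hprod : (∏ l, pA (a (l + i))) = ∏ l, pA (a l) :=
        Equiv.prod_comp (Equiv.addRight i) (fun k => pA (a k))
      have hfilter : (Finset.univ.filter (fun k => a (k + i) ∈ A')).card
          = (Finset.univ.filter (fun k => a k ∈ A')).card := by
        apply Finset.card_bij (fun k _ => k + i)
        · intro k hk
          simp only [Finset.mem_filter, Finset.mem_univ, true_and] at hk ⊢
          exact hk
        · intro k1 _ k2 _ h
          exact add_right_cancel h
        · intro k hk
          simp only [Finset.mem_filter, Finset.mem_univ, true_and] at hk
          exact ⟨k - i, by simp [Finset.mem_filter, sub_add_cancel, hk], by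
            rw [sub_add_cancel]⟩
      rw [h0, h1, hprod, hfilter, hμ]
      simp only [Prod.mk.injEq]
      split_ifs with h h2
      · rfl
      · exact absurd (h.1 ▸ hy) h2
      · rfl
    calc (∑ ω : (Fin (m+2) → α) × Fin (m+2),
            if (fun p : (Fin (m+2) → α) × Fin (m+2) => (p.1 p.2, p.1 (J p))) ω = (y,z) then μ ω else 0)
        = ∑ i : Fin (m+2), ∑ a : Fin (m+2) → α,
            if ((a i, a (J (a, i))) = (y, z)) then μ (a, i) else 0 := by
          rw [Fintype.sum_prod_type, Finset.sum_comm]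
      _ = ∑ _i : Fin (m+2), (pA y * pA z / c *
              ∑ b : Fin m → α,
                (∏ l, pA (b l)) /
                  (1 + (if z ∈ A' then (1 : ℝ) else 0)
                    + ∑ k, (if b k ∈ A' then (1 : ℝ) else 0))) :=
          Finset.sum_congr rfl fun i _ => key i
      _ = _ := by
          rw [Finset.sum_const, Finset.card_univ, Fintype.card_fin, nsmul_eq_mul]
          push_cast
          ring
end
end

section
/- Let M be uniform on a set of size 2^{nR₀}, let a codebook 𝒞 be a random variable, and let U^n be a deterministic function of (𝒞, M). Suppose X^n and Z^n are jointly distributed with (𝒞, M, U^n) such that the channel from X to Z is memoryless: H(Zⁿ|Xⁿ, 𝒞) = n·H(Z|X) for a single-letter pair (X,Z), H(Zⁿ|Uⁿ) ≤ n·H(Z|U), and H(Zⁿ|Xⁿ,Uⁿ) = n·H(Z|X,U) with H(Z|X)=H(Z|X,U). Then I(Xⁿ;Zⁿ|𝒞) ≤ nR₀ + n·I(X;Z|U). -/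
open Finset Real

noncomputable section

variable {Ω : Type*} [Fintype Ω]

def pushf {α β : Type*} [Fintype α] [DecidableEq β] (g : α → β) (p : α → ℝ) (b : β) : ℝ :=
  ∑ a, if g a = b then p a else 0

def Hfun {α : Type*} [Fintype α] (p : α → ℝ) : ℝ := -∑ a, p a * Real.logb 2 (p a)

lemma sum_pushf_mul {α β : Type*} [Fintype α] [Fintype β] [DecidableEq β]
    (g : α → β) (p : α → ℝ) (F : β → ℝ) :
    ∑ b, pushf g p b * F b = ∑ a, p a * F (g a) := by
  unfold pushf
  simp only [Finset.sum_mul, ite_mul, zero_mul]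
  rw [Finset.sum_comm]
  refine Finset.sum_congr rfl fun a _ => ?_
  simp

lemma sum_pushf {α β : Type*} [Fintype α] [Fintype β] [DecidableEq β]
    (g : α → β) (p : α → ℝ) : ∑ b, pushf g p b = ∑ a, p a := by
  have := sum_pushf_mul g p (fun _ => 1)
  simpa using this

lemma pushf_nonneg {α β : Type*} [Fintype α] [DecidableEq β]
    (g : α → β) (p : α → ℝ) (hp : ∀ a, 0 ≤ p a) (b : β) : 0 ≤ pushf g p b :=
  Finset.sum_nonneg fun a _ => by split <;> simp [hp a]

lemma le_pushf {α β : Type*} [Fintype α] [DecidableEq β]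
    (g : α → β) (p : α → ℝ) (hp : ∀ a, 0 ≤ p a) (a : α) : p a ≤ pushf g p (g a) := by
  have h := Finset.single_le_sum (f := fun a' => if g a' = g a then p a' else 0)
    (fun i _ => by split <;> simp [hp i]) (Finset.mem_univ a)
  simpa [pushf] using h

lemma Hfun_pushf_le {α β : Type*} [Fintype α] [Fintype β] [DecidableEq β]
    (g : α → β) (p : α → ℝ) (hp : ∀ a, 0 ≤ p a) :
    Hfun (pushf g p) ≤ Hfun p := by
  unfold Hfun
  rw [sum_pushf_mul g p (fun b => Real.logb 2 (pushf g p b))]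
  apply neg_le_neg
  apply Finset.sum_le_sum
  intro a _
  rcases eq_or_lt_of_le (hp a) with h | h
  · simp [← h]
  · exact mul_le_mul_of_nonneg_left
      (Real.logb_le_logb_of_le one_lt_two h (le_pushf g p hp a)) (le_of_lt h)

lemma pr_nonneg {α : Type*} [DecidableEq α] {μ : Ω → ℝ} (hμ0 : ∀ ω, 0 ≤ μ ω)
    (X : Ω → α) (a : α) : 0 ≤ pr μ X a :=
  Finset.sum_nonneg fun ω _ => by split <;> simp [hμ0 ω]

lemma pr_comp {α β : Type*} [Fintype α] [DecidableEq α] [DecidableEq β]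
    (μ : Ω → ℝ) (X : Ω → α) (g : α → β) (b : β) :
    pr μ (fun ω => g (X ω)) b = pushf g (pr μ X) b := by
  unfold pr pushf
  have h : ∀ a : α, (if g a = b then (∑ ω, if X ω = a then μ ω else 0) else 0)
      = ∑ ω, if g a = b then (if X ω = a then μ ω else 0) else 0 := by
    intro a; split <;> simp
  simp only [h]
  rw [Finset.sum_comm]
  refine Finset.sum_congr rfl fun ω _ => ?_
  rw [Finset.sum_eq_single (X ω)]
  · simp
  · intro a _ ha
    split <;> simp [Ne.symm ha]
  · simp

lemma ent_eq_Hfun {α : Type*} [Fintype α] [DecidableEq α] (μ : Ω → ℝ) (X : Ω → α) :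
    ent μ X = Hfun (pr μ X) := rfl

lemma ent_comp_eq {α β : Type*} [Fintype α] [DecidableEq α] [Fintype β] [DecidableEq β]
    (μ : Ω → ℝ) (X : Ω → α) (g : α → β) :
    ent μ (fun ω => g (X ω)) = Hfun (pushf g (pr μ X)) := by
  unfold ent Hfun
  congr 1
  exact Finset.sum_congr rfl fun b _ => by rw [pr_comp]

lemma ent_comp_le {α β : Type*} [Fintype α] [DecidableEq α] [Fintype β] [DecidableEq β]
    (μ : Ω → ℝ) (hμ0 : ∀ ω, 0 ≤ μ ω) (X : Ω → α) (g : α → β) :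
    ent μ (fun ω => g (X ω)) ≤ ent μ X := by
  rw [ent_comp_eq, ent_eq_Hfun]
  exact Hfun_pushf_le g _ (fun a => pr_nonneg hμ0 X a)

lemma ent_congr {α β : Type*} [Fintype α] [DecidableEq α] [Fintype β] [DecidableEq β]
    (μ : Ω → ℝ) (hμ0 : ∀ ω, 0 ≤ μ ω) (X : Ω → α) (g : α → β) (h : β → α)
    (hgh : ∀ a, h (g a) = a) :
    ent μ (fun ω => g (X ω)) = ent μ X := by
  refine le_antisymm (ent_comp_le μ hμ0 X g) ?_
  have h2 := ent_comp_le μ hμ0 (fun ω => g (X ω)) h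
  simpa [hgh] using h2

lemma term_ineq (p a b c : ℝ) (hp : 0 ≤ p) (ha0 : 0 ≤ a) (hb0 : 0 ≤ b) (hc0 : 0 ≤ c)
    (ha : p ≤ a) (hb : p ≤ b) (hc : p ≤ c) :
    p * Real.logb 2 a + p * Real.logb 2 b
      ≤ p * Real.logb 2 p + p * Real.logb 2 c + (a * b / c - p) / Real.log 2 := by
  have hlog2 : 0 < Real.log 2 := Real.log_pos one_lt_two
  rcases eq_or_lt_of_le hp with h | h
  · have : 0 ≤ a * b / c := by positivity
    rw [← h]
    simp only [zero_mul, zero_add, sub_zero]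
    positivity
  · have ha' : 0 < a := lt_of_lt_of_le h ha
    have hb' : 0 < b := lt_of_lt_of_le h hb
    have hc' : 0 < c := lt_of_lt_of_le h hc
    have hq : 0 < a * b / c := by positivity
    have hqp : 0 < a * b / c / p := by positivity
    have hlog : Real.log (a * b / c / p) ≤ a * b / c / p - 1 :=
      Real.log_le_sub_one_of_pos hqp
    have hexp : Real.log (a * b / c / p) = Real.log a + Real.log b - Real.log c - Real.log p := by
      rw [Real.log_div (by positivity) (ne_of_gt h), Real.log_div (by positivity) (ne_of_gt hc'),
        Real.log_mul (ne_of_gt ha') (ne_of_gt hb')]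
      try ring
    have key : Real.log a + Real.log b - Real.log c - Real.log p ≤ a * b / c / p - 1 := by
      rw [← hexp]; exact hlog
    have hmul : p * (Real.log a + Real.log b - Real.log c - Real.log p) ≤ a * b / c - p := by
      have := mul_le_mul_of_nonneg_left key hp
      calc p * (Real.log a + Real.log b - Real.log c - Real.log p)
          ≤ p * (a * b / c / p - 1) := this
        _ = a * b / c - p := by field_simp
    unfold Real.logb
    have hdiv : p * (Real.log a + Real.log b - Real.log c - Real.log p) / Real.log 2
        ≤ (a * b / c - p) / Real.log 2 := by
      exact div_le_div_of_nonneg_right hmul hlog2.le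
    have heq : p * (Real.log a / Real.log 2) + p * (Real.log b / Real.log 2)
        - p * (Real.log p / Real.log 2) - p * (Real.log c / Real.log 2)
        = p * (Real.log a + Real.log b - Real.log c - Real.log p) / Real.log 2 := by
      ring
    linarith [hdiv, heq]

lemma marg_fst {α β γ' : Type*} [Fintype α] [DecidableEq α] [Fintype β] [DecidableEq β]
    [Fintype γ'] [DecidableEq γ'] (p : (α × β) × γ' → ℝ) (c : γ') :
    ∑ a, pushf (fun q : (α × β) × γ' => (q.1.1, q.2)) p (a, c)
      = pushf (fun q : (α × β) × γ' => q.2) p c := by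
  unfold pushf
  rw [Finset.sum_comm]
  refine Finset.sum_congr rfl fun x _ => ?_
  by_cases h : x.2 = c
  · simp [Prod.ext_iff, h]
  · simp [Prod.ext_iff, h]

lemma marg_snd {α β γ' : Type*} [Fintype α] [DecidableEq α] [Fintype β] [DecidableEq β]
    [Fintype γ'] [DecidableEq γ'] (p : (α × β) × γ' → ℝ) (c : γ') :
    ∑ b, pushf (fun q : (α × β) × γ' => (q.1.2, q.2)) p (b, c)
      = pushf (fun q : (α × β) × γ' => q.2) p c := by
  unfold pushf
  rw [Finset.sum_comm]
  refine Finset.sum_congr rfl fun x _ => ?_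
  by_cases h : x.2 = c
  · simp [Prod.ext_iff, h]
  · simp [Prod.ext_iff, h]

lemma ssa {α β γ' : Type*} [Fintype α] [DecidableEq α] [Fintype β] [DecidableEq β]
    [Fintype γ'] [DecidableEq γ'] (p : (α × β) × γ' → ℝ) (hp : ∀ x, 0 ≤ p x) :
    Hfun p + Hfun (pushf (fun q => q.2) p)
      ≤ Hfun (pushf (fun q => (q.1.1, q.2)) p) + Hfun (pushf (fun q => (q.1.2, q.2)) p) := by
  set pAC := pushf (fun q : (α × β) × γ' => (q.1.1, q.2)) p with hpAC
  set pBC := pushf (fun q : (α × β) × γ' => (q.1.2, q.2)) p with hpBC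
  set pC := pushf (fun q : (α × β) × γ' => q.2) p with hpC
  have hlog2 : 0 < Real.log 2 := Real.log_pos one_lt_two
  have hACn : ∀ b, 0 ≤ pAC b := pushf_nonneg _ p hp
  have hBCn : ∀ b, 0 ≤ pBC b := pushf_nonneg _ p hp
  have hCn : ∀ b, 0 ≤ pC b := pushf_nonneg _ p hp
  -- rewrite the pushforward entropies as sums over x
  have eAC : Hfun pAC = -∑ x : (α × β) × γ', p x * Real.logb 2 (pAC (x.1.1, x.2)) := by
    unfold Hfun; rw [hpAC, sum_pushf_mul]
  have eBC : Hfun pBC = -∑ x : (α × β) × γ', p x * Real.logb 2 (pBC (x.1.2, x.2)) := by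
    unfold Hfun; rw [hpBC, sum_pushf_mul]
  have eC : Hfun pC = -∑ x : (α × β) × γ', p x * Real.logb 2 (pC x.2) := by
    unfold Hfun; rw [hpC, sum_pushf_mul]
  rw [eAC, eBC, eC]
  unfold Hfun
  -- key sum bound: ∑ x, pAC * pBC / pC ≤ ∑ x, p x
  have hqsum : ∑ x : (α × β) × γ', pAC (x.1.1, x.2) * pBC (x.1.2, x.2) / pC x.2 ≤ ∑ x : (α × β) × γ', p x := by
    rw [← sum_pushf (fun q : (α × β) × γ' => q.2) p, ← hpC]
    rw [Fintype.sum_prod_type, Finset.sum_comm]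
    apply Finset.sum_le_sum
    intro c _
    have : ∑ ab : α × β, pAC (ab.1, c) * pBC (ab.2, c) / pC c
        = (∑ a, pAC (a, c)) * (∑ b, pBC (b, c)) / pC c := by
      rw [Finset.sum_mul_sum, Finset.sum_div]
      rw [Fintype.sum_prod_type]
      simp [Finset.sum_div]
    rw [this, marg_fst, marg_snd]
    by_cases h : pC c = 0
    · simp [h]
    · rw [mul_div_assoc, div_self h, mul_one]
  have tsum : ∀ x : (α × β) × γ',
      p x * Real.logb 2 (pAC (x.1.1, x.2)) + p x * Real.logb 2 (pBC (x.1.2, x.2))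
        ≤ p x * Real.logb 2 (p x) + p x * Real.logb 2 (pC x.2)
          + (pAC (x.1.1, x.2) * pBC (x.1.2, x.2) / pC x.2 - p x) / Real.log 2 := by
    intro x
    refine term_ineq (p x) _ _ _ (hp x) (hACn _) (hBCn _) (hCn _) ?_ ?_ ?_
    · exact le_pushf (fun q : (α × β) × γ' => (q.1.1, q.2)) p hp x
    · exact le_pushf (fun q : (α × β) × γ' => (q.1.2, q.2)) p hp x
    · exact le_pushf (fun q : (α × β) × γ' => q.2) p hp x
  have hmain : ∑ x : (α × β) × γ', p x * Real.logb 2 (pAC (x.1.1, x.2))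
      + ∑ x : (α × β) × γ', p x * Real.logb 2 (pBC (x.1.2, x.2))
      ≤ (∑ x : (α × β) × γ', p x * Real.logb 2 (p x)) + (∑ x : (α × β) × γ', p x * Real.logb 2 (pC x.2)) :=
  calc ∑ x : (α × β) × γ', p x * Real.logb 2 (pAC (x.1.1, x.2)) + ∑ x : (α × β) × γ', p x * Real.logb 2 (pBC (x.1.2, x.2))
      = ∑ x : (α × β) × γ', (p x * Real.logb 2 (pAC (x.1.1, x.2)) + p x * Real.logb 2 (pBC (x.1.2, x.2))) := by
        rw [Finset.sum_add_distrib]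
    _ ≤ ∑ x : (α × β) × γ', (p x * Real.logb 2 (p x) + p x * Real.logb 2 (pC x.2)
          + (pAC (x.1.1, x.2) * pBC (x.1.2, x.2) / pC x.2 - p x) / Real.log 2) :=
        Finset.sum_le_sum fun x _ => tsum x
    _ = (∑ x : (α × β) × γ', p x * Real.logb 2 (p x)) + (∑ x : (α × β) × γ', p x * Real.logb 2 (pC x.2))
          + ((∑ x : (α × β) × γ', pAC (x.1.1, x.2) * pBC (x.1.2, x.2) / pC x.2) - ∑ x : (α × β) × γ', p x) / Real.log 2 := by
        rw [Finset.sum_add_distrib, Finset.sum_add_distrib, ← Finset.sum_div,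
          Finset.sum_sub_distrib]
    _ ≤ (∑ x : (α × β) × γ', p x * Real.logb 2 (p x)) + (∑ x : (α × β) × γ', p x * Real.logb 2 (pC x.2)) := by
        have : ((∑ x : (α × β) × γ', pAC (x.1.1, x.2) * pBC (x.1.2, x.2) / pC x.2) - ∑ x : (α × β) × γ', p x) / Real.log 2 ≤ 0 :=
          div_nonpos_of_nonpos_of_nonneg (by linarith [hqsum]) hlog2.le
        linarith
  linarith [hmain]

lemma cmi_nonneg {α β γ'' : Type*} [Fintype α] [DecidableEq α] [Fintype β] [DecidableEq β]
    [Fintype γ''] [DecidableEq γ''] (μ : Ω → ℝ) (hμ0 : ∀ ω, 0 ≤ μ ω)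
    (X : Ω → α) (Y : Ω → β) (Z : Ω → γ'') : 0 ≤ condMutInf μ X Y Z := by
  set T : Ω → (α × β) × γ'' := fun ω => ((X ω, Y ω), Z ω) with hT
  set p := pr μ T with hp
  have hpn : ∀ x, 0 ≤ p x := fun x => pr_nonneg hμ0 T x
  have e1 : ent μ (fun ω => (X ω, Z ω))
      = Hfun (pushf (fun q : (α × β) × γ'' => (q.1.1, q.2)) p) :=
    ent_comp_eq μ T (fun q => (q.1.1, q.2))
  have e2 : ent μ (fun ω => (Y ω, Z ω))
      = Hfun (pushf (fun q : (α × β) × γ'' => (q.1.2, q.2)) p) :=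
    ent_comp_eq μ T (fun q => (q.1.2, q.2))
  have e3 : ent μ Z = Hfun (pushf (fun q : (α × β) × γ'' => q.2) p) :=
    ent_comp_eq μ T (fun q => q.2)
  have e4 : ent μ (fun ω => ((X ω, Y ω), Z ω)) = Hfun p := rfl
  have h := ssa p hpn
  unfold condMutInf condEnt
  rw [e1, e2, e3, e4]
  linarith [h]

lemma ent_const_punit (μ : Ω → ℝ) (hμ : IsPMF μ) :
    ent μ (fun _ => ()) = 0 := by
  unfold ent pr
  simp [hμ.2]

lemma mi_nonneg {α β : Type*} [Fintype α] [DecidableEq α] [Fintype β] [DecidableEq β]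
    (μ : Ω → ℝ) (hμ : IsPMF μ) (A : Ω → α) (B : Ω → β) :
    ent μ (fun ω => (A ω, B ω)) ≤ ent μ A + ent μ B := by
  have h := cmi_nonneg μ hμ.1 A B (fun _ => ())
  unfold condMutInf condEnt at h
  have eA : ent μ (fun ω => (A ω, ())) = ent μ A :=
    ent_congr μ hμ.1 A (fun a => (a, ())) (fun q => q.1) (fun a => rfl)
  have eB : ent μ (fun ω => (B ω, ())) = ent μ B :=
    ent_congr μ hμ.1 B (fun b => (b, ())) (fun q => q.1) (fun b => rfl)
  have eAB : ent μ (fun ω => ((A ω, B ω), ())) = ent μ (fun ω => (A ω, B ω)) :=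
    ent_congr μ hμ.1 (fun ω => (A ω, B ω)) (fun q => (q, ())) (fun q => q.1)
      (fun q => rfl)
  rw [eA, eB, eAB, ent_const_punit μ hμ] at h
  linarith

lemma cmi_eq {α β γ'' : Type*} [Fintype α] [DecidableEq α] [Fintype β] [DecidableEq β]
    [Fintype γ''] [DecidableEq γ''] (μ : Ω → ℝ) (hμ0 : ∀ ω, 0 ≤ μ ω)
    (A : Ω → α) (B : Ω → β) (Cc : Ω → γ'') :
    condMutInf μ A B Cc = condEnt μ B Cc - condEnt μ B (fun ω => (A ω, Cc ω)) := by
  have h : ent μ (fun ω => (B ω, (A ω, Cc ω))) = ent μ (fun ω => ((A ω, B ω), Cc ω)) :=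
    ent_congr μ hμ0 (fun ω => ((A ω, B ω), Cc ω)) (fun q => (q.1.2, (q.1.1, q.2)))
      (fun q => ((q.2.1, q.1), q.2.2)) (fun q => rfl)
  unfold condMutInf condEnt
  linarith [h]

/-- disturbance-rate bound. `M` is uniform on a set of size `2^{nR₀}`
(so `H(M) = nR₀`), `Uⁿ` is a deterministic function of `(𝒞, M)`, the channel is memoryless:
`H(Zⁿ|Xⁿ,𝒞) = nH(Z|X)`, `H(Zⁿ|Uⁿ) ≤ nH(Z|U)`, `H(Zⁿ|Xⁿ,Uⁿ) = nH(Z|X,U)` with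
`H(Z|X) = H(Z|X,U)`. Then `I(Xⁿ;Zⁿ|𝒞) ≤ nR₀ + nI(X;Z|U)` where `I(X;Z|U) = H(Z|U) − H(Z|X,U)`. -/
theorem stmt8 {γ δ ε ζ κ : Type*} [Fintype γ] [DecidableEq γ] [Fintype δ] [DecidableEq δ]
    [Fintype ε] [DecidableEq ε] [Fintype ζ] [DecidableEq ζ] [Fintype κ] [DecidableEq κ]
    (μ : Ω → ℝ) (hμ : IsPMF μ)
    (M : Ω → γ) (C : Ω → δ) (Xn : Ω → ε) (Zn : Ω → ζ) (Un : Ω → κ)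
    (n : ℕ) (R0 hZX hZU hZXU : ℝ)
    (hM : ent μ M = n * R0)
    (f : δ × γ → κ) (hU : ∀ ω, Un ω = f (C ω, M ω))
    (h1 : condEnt μ Zn (fun ω => (Xn ω, C ω)) = n * hZX)
    (h2 : condEnt μ Zn Un ≤ n * hZU)
    (h3 : condEnt μ Zn (fun ω => (Xn ω, Un ω)) = n * hZXU)
    (h4 : hZX = hZXU) :
    condMutInf μ Xn Zn C ≤ n * R0 + n * (hZU - hZXU) := by
  have hμ0 := hμ.1
  -- Step A: I(Xn;Zn|C) = H(Zn|C) - H(Zn|Xn,C)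
  have keyA : condMutInf μ Xn Zn C
      = condEnt μ Zn C - condEnt μ Zn (fun ω => (Xn ω, C ω)) := cmi_eq μ hμ0 Xn Zn C
  -- Step B: ent(Zn,C) ≤ ent((Zn,M),C)
  have hB : ent μ (fun ω => (Zn ω, C ω)) ≤ ent μ (fun ω => ((Zn ω, M ω), C ω)) :=
    ent_comp_le μ hμ0 (fun ω => ((Zn ω, M ω), C ω)) (fun q => (q.1.1, q.2))
  -- Step C: ent((Zn,M),C) = ent(Zn,(M,C))
  have hC : ent μ (fun ω => ((Zn ω, M ω), C ω)) = ent μ (fun ω => (Zn ω, (M ω, C ω))) :=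
    ent_congr μ hμ0 (fun ω => (Zn ω, (M ω, C ω))) (fun q => ((q.1, q.2.1), q.2.2))
      (fun q => (q.1.1, (q.1.2, q.2))) (fun q => rfl)
  -- Step D: H(M|C) ≤ H(M), i.e. ent(M,C) - ent C ≤ ent M
  have hD : ent μ (fun ω => (M ω, C ω)) ≤ ent μ M + ent μ C := mi_nonneg μ hμ M C
  -- Step E: H(Zn|(M,C)) ≤ H(Zn|Un)
  have hUn : Un = fun ω => f (C ω, M ω) := funext hU
  have hE0 : condMutInf μ (fun ω => (M ω, C ω)) Zn (fun ω => f (C ω, M ω))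
      = condEnt μ Zn (fun ω => f (C ω, M ω))
        - condEnt μ Zn (fun ω => ((M ω, C ω), f (C ω, M ω))) :=
    cmi_eq μ hμ0 (fun ω => (M ω, C ω)) Zn (fun ω => f (C ω, M ω))
  have hE1 : 0 ≤ condMutInf μ (fun ω => (M ω, C ω)) Zn (fun ω => f (C ω, M ω)) :=
    cmi_nonneg μ hμ0 _ _ _
  have hE2a : ent μ (fun ω => (Zn ω, ((M ω, C ω), f (C ω, M ω))))
      = ent μ (fun ω => (Zn ω, (M ω, C ω))) :=
    ent_congr μ hμ0 (fun ω => (Zn ω, (M ω, C ω)))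
      (fun q => (q.1, (q.2, f (q.2.2, q.2.1)))) (fun q => (q.1, q.2.1)) (fun q => rfl)
  have hE2b : ent μ (fun ω => ((M ω, C ω), f (C ω, M ω))) = ent μ (fun ω => (M ω, C ω)) :=
    ent_congr μ hμ0 (fun ω => (M ω, C ω)) (fun q => (q, f (q.2, q.1))) (fun q => q.1)
      (fun q => rfl)
  have hE : condEnt μ Zn (fun ω => (M ω, C ω)) ≤ condEnt μ Zn Un := by
    rw [hUn]
    unfold condEnt at hE0 ⊢
    rw [hE2a, hE2b] at hE0
    linarith [hE0, hE1]
  -- h2 with Un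
  -- combine everything
  rw [keyA, h1, h4]
  have hcond : condEnt μ Zn (fun ω => (M ω, C ω))
      = ent μ (fun ω => (Zn ω, (M ω, C ω))) - ent μ (fun ω => (M ω, C ω)) := rfl
  have hcondZC : condEnt μ Zn C = ent μ (fun ω => (Zn ω, C ω)) - ent μ C := rfl
  have hfin : condEnt μ Zn C ≤ ↑n * R0 + ↑n * hZU := by
    rw [hcondZC]
    have : ent μ (fun ω => (Zn ω, C ω)) ≤ ent μ (fun ω => (Zn ω, (M ω, C ω))) := by
      rw [← hC]; exact hB
    have h5 : condEnt μ Zn (fun ω => (M ω, C ω)) ≤ ↑n * hZU := le_trans hE h2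
    rw [hcond] at h5
    linarith [hD, hM, this, h5]
  linarith [hfin]
end
end

section
/- For the scalar Gaussian channel Y = X + W₁, Z = X + W₂ with W₁ ~ N(0,1), W₂ ~ N(0,N), N > 1, and input Xⁿ satisfying (1/n)h(Yⁿ) ≥ (1/2)log(2πe(1+αP)) for some α ∈ [0,1], the entropy power inequality implies (1/n)h(Zⁿ) ≥ (1/2)log(2πe(N+αP)), where Zⁿ = Yⁿ + W̃₂ⁿ with W̃₂ ~ N(0, N−1) independent of Yⁿ. -/
/-- EPI step for the scalar Gaussian channel. If `(1/n)h(Yⁿ) ≥ ½log(2πe(1+αP))`,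
`h(W̃₂ⁿ) = (n/2)log(2πe(N−1))`, and the entropy power inequality
`2^{(2/n)h(Zⁿ)} ≥ 2^{(2/n)h(Yⁿ)} + 2^{(2/n)h(W̃₂ⁿ)}` holds (with `Zⁿ = Yⁿ + W̃₂ⁿ`),
then `(1/n)h(Zⁿ) ≥ ½log(2πe(N+αP))`. -/
theorem stmt11 (n : ℕ) (hn : 0 < n) (N P α hY hZ hW : ℝ)
    (hN : 1 < N) (hP : 0 ≤ P) (hα0 : 0 ≤ α) (hα1 : α ≤ 1)
    (hhY : (1 / n) * hY ≥ (1 / 2) * Real.logb 2 (2 * Real.pi * Real.exp 1 * (1 + α * P)))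
    (hhW : hW = ((n : ℝ) / 2) * Real.logb 2 (2 * Real.pi * Real.exp 1 * (N - 1)))
    (hEPI : (2 : ℝ) ^ ((2 / (n : ℝ)) * hZ)
        ≥ (2 : ℝ) ^ ((2 / (n : ℝ)) * hY) + (2 : ℝ) ^ ((2 / (n : ℝ)) * hW)) :
    (1 / n) * hZ ≥ (1 / 2) * Real.logb 2 (2 * Real.pi * Real.exp 1 * (N + α * P)) := by
  have hnpos : (0 : ℝ) < n := by exact_mod_cast hn
  have hc : (0 : ℝ) < 2 * Real.pi * Real.exp 1 := by positivity
  have hαP : 0 ≤ α * P := mul_nonneg hα0 hP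
  have h1 : (0 : ℝ) < 1 + α * P := by linarith
  have h2 : (0 : ℝ) < N - 1 := by linarith
  have h3 : (0 : ℝ) < N + α * P := by linarith
  -- from hhY : (2/n)*hY ≥ logb 2 (c*(1+αP))
  have hY' : (2 / (n : ℝ)) * hY ≥ Real.logb 2 (2 * Real.pi * Real.exp 1 * (1 + α * P)) := by
    have := mul_le_mul_of_nonneg_left hhY (by norm_num : (0:ℝ) ≤ 2)
    calc Real.logb 2 (2 * Real.pi * Real.exp 1 * (1 + α * P))
        = 2 * ((1/2) * Real.logb 2 (2 * Real.pi * Real.exp 1 * (1 + α * P))) := by ring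
      _ ≤ 2 * ((1 / n) * hY) := this
      _ = (2 / (n : ℝ)) * hY := by ring
  have hb : (1 : ℝ) < 2 := one_lt_two
  have eY : (2 : ℝ) ^ ((2 / (n : ℝ)) * hY) ≥ 2 * Real.pi * Real.exp 1 * (1 + α * P) := by
    calc (2 : ℝ) ^ ((2 / (n : ℝ)) * hY)
        ≥ (2 : ℝ) ^ (Real.logb 2 (2 * Real.pi * Real.exp 1 * (1 + α * P))) :=
          Real.rpow_le_rpow_left_iff hb |>.mpr hY'
      _ = 2 * Real.pi * Real.exp 1 * (1 + α * P) := Real.rpow_logb (by norm_num) (by norm_num) (by linarith [mul_pos hc h1])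
  have eW : (2 : ℝ) ^ ((2 / (n : ℝ)) * hW) = 2 * Real.pi * Real.exp 1 * (N - 1) := by
    have : (2 / (n : ℝ)) * hW = Real.logb 2 (2 * Real.pi * Real.exp 1 * (N - 1)) := by
      rw [hhW]; field_simp
    rw [this]
    exact Real.rpow_logb (by norm_num) (by norm_num) (mul_pos hc h2)
  have hZ' : (2 : ℝ) ^ ((2 / (n : ℝ)) * hZ) ≥ 2 * Real.pi * Real.exp 1 * (N + α * P) := by
    have : 2 * Real.pi * Real.exp 1 * (1 + α * P) + 2 * Real.pi * Real.exp 1 * (N - 1)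
        = 2 * Real.pi * Real.exp 1 * (N + α * P) := by ring
    linarith [hEPI, eY, eW.ge, eW.le]
  have key : (2 / (n : ℝ)) * hZ ≥ Real.logb 2 (2 * Real.pi * Real.exp 1 * (N + α * P)) := by
    have h4 : (2:ℝ) ^ (Real.logb 2 (2 * Real.pi * Real.exp 1 * (N + α * P)))
        ≤ (2:ℝ) ^ ((2 / (n : ℝ)) * hZ) := by
      rw [Real.rpow_logb (by norm_num) (by norm_num) (mul_pos hc h3)]
      exact hZ'
    exact (Real.rpow_le_rpow_left_iff hb).mp h4
  rw [show (2/(n:ℝ))*hZ = 2*((1/(n:ℝ))*hZ) from by ring] at key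
  linarith
end
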